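/- Let $F \ge 0$ (playing the role of the wetting free energy $\textsc{f}(\lambda)$), let $\mathrm{I}: [0,\infty) \to [0,\infty]$ be the Legendre transform $\mathrm{I}(x) = \sup_{t\ge0}\{tx - \Lambda(t)\}$ of a convex function $\Lambda$ with $\Lambda(0)=0$, $\Lambda'(0)=0$, differentiable and strictly convex on $[0,t_0)$ with $t_0 = \sup\{t:\Lambda(t)<\infty\}>0$, and fix $a>0$. Define $g(w) = wF + w\,\mathrm{I}(a/w)$ for $w>0$ and $g(0) = \lim_{w\downarrow 0} w \mathrm{I}(a/w)$. Then $\inf_{w\ge0} g(w) = a\,\Lambda^{-1}(F)$, where $\Lambda^{-1}$ denotes the left-continuous generalized inverse of $\Lambda$ (so $\Lambda^{-1}(F)=t_0$ if $F \ge \Lambda(t_0)$). -/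

import Mathlib

open MeasureTheory Real Filter Topology
open scoped ENNReal

/-- Let `Λ` be convex with `Λ(0) = 0`, differentiable and strictly convex
on `[0, t0)` where `t0 = sup{t : Λ(t) < ∞} > 0` (here `t0 : ℝ≥0∞`, and `Λ` is the
real-valued restriction to its domain `D = {t | 0 ≤ t, t < t0}`), with `Λ'(0) = 0`.
Let `I(x) = sup_{t ∈ D} (t x - Λ(t))⁺ ∈ [0,∞]` be its Legendre transform, `F ≥ 0`,
`a > 0`, and `g(w) = w F + w I(a/w)` for `w > 0`, with `g(0) = lim_{w ↓ 0} w I(a/w)`.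
Then `inf_{w ≥ 0} g(w) = a Λ⁻¹(F)` where `Λ⁻¹` is the (generalized) inverse of `Λ`,
equal to `t0` if `F ≥ Λ(t0⁻)`, written here as `sSup {t ∈ D : Λ(t) ≤ F}`. -/
theorem inf_g_eq_inverse
    (Λ : ℝ → ℝ) (t0 : ℝ≥0∞) (ht0 : 0 < t0)
    (hΛ0 : Λ 0 = 0)
    (hconv : StrictConvexOn ℝ {t : ℝ | 0 ≤ t ∧ ENNReal.ofReal t < t0} Λ)
    (hdiff : ∀ t : ℝ, 0 < t → ENNReal.ofReal t < t0 → DifferentiableAt ℝ Λ t)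
    (hderiv0 : HasDerivWithinAt Λ 0 (Set.Ici 0) 0)
    (F a : ℝ) (hF : 0 ≤ F) (ha : 0 < a)
    (I : ℝ → ℝ≥0∞)
    (hI : ∀ x : ℝ, I x =
      ⨆ t ∈ {t : ℝ | 0 ≤ t ∧ ENNReal.ofReal t < t0}, ENNReal.ofReal (t * x - Λ t))
    (g0 : ℝ≥0∞)
    (hg0 : Tendsto (fun w : ℝ => ENNReal.ofReal w * I (a / w))
      (nhdsWithin 0 (Set.Ioi 0)) (nhds g0)) :
    (g0 ⊓ ⨅ (w : ℝ) (_ : 0 < w),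
        (ENNReal.ofReal (w * F) + ENNReal.ofReal w * I (a / w)))
      = ENNReal.ofReal a *
        sSup {s : ℝ≥0∞ | ∃ t : ℝ,
          (0 ≤ t ∧ ENNReal.ofReal t < t0) ∧ s = ENNReal.ofReal t ∧ Λ t ≤ F} := by
  set D : Set ℝ := {t : ℝ | 0 ≤ t ∧ ENNReal.ofReal t < t0} with hD
  have hmem0 : (0:ℝ) ∈ D := ⟨le_refl 0, by simpa using ht0⟩
  -- Λ is nonnegative on D
  have hΛnn : ∀ t : ℝ, t ∈ D → 0 ≤ Λ t := by
    rintro t ⟨ht, htlt⟩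
    rcases eq_or_lt_of_le ht with h0 | tpos
    · rw [← h0, hΛ0]
    by_contra hneg
    push_neg at hneg
    have hsl : ∀ u : ℝ, 0 < u → u < t → Λ u / u ≤ Λ t / t := by
      intro u hu hut
      have huD : u ∈ D := ⟨hu.le,
        lt_of_le_of_lt (ENNReal.ofReal_le_ofReal hut.le) htlt⟩
      have h := hconv.convexOn.slope_mono_adjacent hmem0 ⟨ht, htlt⟩ hu hut
      rw [hΛ0, sub_zero, sub_zero] at h
      rw [div_le_div_iff₀ hu (by linarith)] at h
      rw [div_le_div_iff₀ hu tpos]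
      nlinarith
    have hlim := hasDerivWithinAt_iff_tendsto_slope.mp hderiv0
    rw [Set.Ici_sdiff_left] at hlim
    have hle : (0:ℝ) ≤ Λ t / t := by
      refine le_of_tendsto hlim ?_
      filter_upwards [Ioo_mem_nhdsGT_of_mem ⟨le_refl (0:ℝ), tpos⟩] with u hu
      rw [slope_def_field, hΛ0, sub_zero, sub_zero]
      exact hsl u hu.1 hu.2
    have : Λ t / t < 0 := div_neg_of_neg_of_pos hneg tpos
    linarith
  -- rewriting `w * I (a/w)`
  have ofwI : ∀ w : ℝ, 0 < w → ENNReal.ofReal w * I (a / w)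
      = ⨆ t ∈ D, ENNReal.ofReal (t * a - w * Λ t) := by
    intro w hw
    rw [hI]
    simp_rw [ENNReal.mul_iSup]
    refine iSup_congr fun t => iSup_congr fun htD => ?_
    rw [← ENNReal.ofReal_mul hw.le]
    congr 1
    field_simp
  set SET : Set ℝ≥0∞ := {s : ℝ≥0∞ | ∃ t : ℝ,
      (0 ≤ t ∧ ENNReal.ofReal t < t0) ∧ s = ENNReal.ofReal t ∧ Λ t ≤ F} with hSET
  set S : ℝ≥0∞ := sSup SET with hS
  apply le_antisymm
  · -- upper bound
    by_cases hScase : S < t0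
    · apply ENNReal.le_of_forall_pos_le_add
      intro ε hε _
      have hSfin : S ≠ ⊤ := hScase.ne_top
      set δ : ℝ := (ε : ℝ) / a with hδdef
      have hδ : 0 < δ := div_pos (by exact_mod_cast hε) ha
      have hlt : S < min t0 (S + ENNReal.ofReal δ) :=
        lt_min hScase (ENNReal.lt_add_right hSfin
          (by simpa using (ENNReal.ofReal_pos.mpr hδ).ne'))
      obtain ⟨b1, hb1, hb1'⟩ := exists_between hlt
      obtain ⟨b2, hb2, hb2'⟩ := exists_between hb1'
      have hb2top : b2 ≠ ⊤ := ne_top_of_lt hb2'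
      have hb1top : b1 ≠ ⊤ := ne_top_of_lt hb2
      set t1 : ℝ := b1.toReal with ht1def
      set t2 : ℝ := b2.toReal with ht2def
      have hoft1 : ENNReal.ofReal t1 = b1 := ENNReal.ofReal_toReal hb1top
      have hoft2 : ENNReal.ofReal t2 = b2 := ENNReal.ofReal_toReal hb2top
      have hb1pos : 0 < b1 := lt_of_le_of_lt zero_le hb1
      have ht1pos : 0 < t1 := ENNReal.toReal_pos hb1pos.ne' hb1top
      have ht12 : t1 < t2 := by
        rwa [← ENNReal.toReal_lt_toReal hb1top hb2top] at hb2
      have ht1D : t1 ∈ D := ⟨ENNReal.toReal_nonneg, by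
        rw [hoft1]; exact lt_of_lt_of_le hb1' (min_le_left _ _)⟩
      have ht2D : t2 ∈ D := ⟨ENNReal.toReal_nonneg, by
        rw [hoft2]; exact lt_of_lt_of_le hb2' (min_le_left _ _)⟩
      have hFt1 : F < Λ t1 := by
        by_contra hc
        push_neg at hc
        have hle : ENNReal.ofReal t1 ≤ S := le_sSup ⟨t1, ⟨ht1D.1, ht1D.2⟩, rfl, hc⟩
        rw [hoft1] at hle
        exact absurd hb1 (not_lt.mpr hle)
      set m : ℝ := (Λ t2 - Λ t1) / (t2 - t1) with hmdef
      have hslope01 : Λ t1 / t1 < m := by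
        have h := hconv.slope_strict_mono_adjacent hmem0 ht2D ht1pos ht12
        rwa [hΛ0, sub_zero, sub_zero] at h
      have hm : 0 < m := lt_of_le_of_lt (div_nonneg (hΛnn t1 ht1D) ht1pos.le) hslope01
      have hmc : m * (t2 - t1) = Λ t2 - Λ t1 :=
        div_mul_cancel₀ _ (by linarith : t2 - t1 ≠ 0)
      set w : ℝ := a / m with hwdef
      have hw : 0 < w := div_pos ha hm
      have hawm : a = w * m := by rw [hwdef]; field_simp
      have hkey : ∀ t ∈ D, m * (t - t2) ≤ Λ t - Λ t1 := by
        intro t htD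
        rcases lt_trichotomy t t1 with h | h | h
        · have hs := hconv.convexOn.slope_mono_adjacent htD ht2D h ht12
          have e1 : Λ t1 - Λ t ≤ m * (t1 - t) := by
            rw [← hmdef] at hs
            exact (div_le_iff₀ (by linarith : (0:ℝ) < t1 - t)).mp hs
          have e2 : (0:ℝ) ≤ m * (t2 - t1) := mul_nonneg hm.le (by linarith)
          nlinarith
        · rw [h]
          nlinarith [mul_pos hm (sub_pos.mpr ht12)]
        · rcases le_or_gt t t2 with h2 | h2
          · have hs := hconv.convexOn.slope_mono_adjacent hmem0 htD ht1pos h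
            rw [hΛ0, sub_zero, sub_zero] at hs
            have h3 : 0 ≤ (Λ t - Λ t1) / (t - t1) :=
              le_trans (div_nonneg (hΛnn t1 ht1D) ht1pos.le) hs
            have h4 : 0 ≤ Λ t - Λ t1 := by
              have h5 := mul_nonneg h3 (by linarith : (0:ℝ) ≤ t - t1)
              rwa [div_mul_cancel₀ _ (by linarith : t - t1 ≠ 0)] at h5
            nlinarith [mul_nonneg hm.le (sub_nonneg.mpr h2)]
          · have hs := hconv.convexOn.slope_mono_adjacent ht1D htD ht12 h2
            rw [← hmdef] at hs
            have e1 : m * (t - t2) ≤ Λ t - Λ t2 :=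
              (le_div_iff₀ (by linarith : (0:ℝ) < t - t2)).mp hs
            have e2 : (0:ℝ) ≤ Λ t2 - Λ t1 := by
              nlinarith [mul_pos hm (sub_pos.mpr ht12)]
            linarith
      have hΛt1m : Λ t1 ≤ m * t1 := by
        have hs := hslope01.le
        calc Λ t1 = (Λ t1 / t1) * t1 := by field_simp
          _ ≤ m * t1 := mul_le_mul_of_nonneg_right hs ht1pos.le
      have hwF : w * F ≤ a * t2 := by
        have hF1 : F ≤ m * t2 := by nlinarith [hm.le]
        calc w * F ≤ w * (m * t2) := mul_le_mul_of_nonneg_left hF1 hw.le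
          _ = a * t2 := by rw [hawm]; ring
      have hmain : ∀ t ∈ D, t * a - w * Λ t ≤ a * t2 - w * F := by
        intro t htD
        have hk := mul_le_mul_of_nonneg_left (hkey t htD) hw.le
        have hF1 : w * F ≤ w * Λ t1 := mul_le_mul_of_nonneg_left hFt1.le hw.le
        rw [hawm]
        nlinarith [hk, hF1]
      refine le_trans inf_le_right ?_
      refine le_trans (iInf_le _ w) ?_
      refine le_trans (iInf_le _ hw) ?_
      have hstep : ENNReal.ofReal (w * F) + ENNReal.ofReal w * I (a / w)
          ≤ ENNReal.ofReal (a * t2) := by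
        rw [ofwI w hw]
        have hsplit : ENNReal.ofReal (a * t2)
            = ENNReal.ofReal (w * F) + ENNReal.ofReal (a * t2 - w * F) := by
          rw [← ENNReal.ofReal_add (mul_nonneg hw.le hF) (by linarith)]
          ring_nf
        rw [hsplit]
        exact add_le_add_right
          (iSup₂_le fun t htD => ENNReal.ofReal_le_ofReal (hmain t htD)) _
      refine le_trans hstep ?_
      calc ENNReal.ofReal (a * t2)
          = ENNReal.ofReal a * ENNReal.ofReal t2 := ENNReal.ofReal_mul ha.le
        _ = ENNReal.ofReal a * b2 := by rw [hoft2]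
        _ ≤ ENNReal.ofReal a * (S + ENNReal.ofReal δ) :=
            mul_le_mul_right (le_of_lt (lt_of_lt_of_le hb2' (min_le_right _ _))) _
        _ = ENNReal.ofReal a * S + ENNReal.ofReal a * ENNReal.ofReal δ := mul_add _ _ _
        _ = ENNReal.ofReal a * S + ↑ε := by
            rw [← ENNReal.ofReal_mul ha.le]
            congr 1
            have haz : a ≠ 0 := ha.ne'
            rw [show a * δ = (ε : ℝ) from by rw [hδdef]; field_simp]
            exact ENNReal.ofReal_coe_nnreal
    · -- S = t0
      have hSle : S ≤ t0 := sSup_le (by rintro s ⟨t, ⟨ht, htlt⟩, rfl, _⟩; exact htlt.le)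
      have hSeq : S = t0 := le_antisymm hSle (not_lt.mp hScase)
      refine le_trans inf_le_left ?_
      refine le_of_tendsto hg0 ?_
      filter_upwards [self_mem_nhdsWithin] with w hw
      rw [ofwI w hw]
      refine iSup₂_le fun t htD => ?_
      calc ENNReal.ofReal (t * a - w * Λ t)
          ≤ ENNReal.ofReal (a * t) := by
            refine ENNReal.ofReal_le_ofReal ?_
            have := hΛnn t htD
            have hw' : (0:ℝ) < w := hw
            nlinarith
        _ = ENNReal.ofReal a * ENNReal.ofReal t :=
            ENNReal.ofReal_mul ha.le
        _ ≤ ENNReal.ofReal a * S := by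
            refine mul_le_mul_right ?_ _
            rw [hSeq]; exact htD.2.le
  · -- lower bound
    rw [ENNReal.mul_sSup]
    apply le_inf
    · refine iSup₂_le ?_
      rintro s ⟨t, htD, rfl, htF⟩
      have h1 : Tendsto (fun w : ℝ => ENNReal.ofReal (t * a - w * Λ t))
          (nhdsWithin 0 (Set.Ioi 0)) (nhds (ENNReal.ofReal (t * a))) := by
        have hc : Tendsto (fun w : ℝ => t * a - w * Λ t) (nhdsWithin 0 (Set.Ioi 0))
            (nhds (t * a)) := by
          have : Tendsto (fun w : ℝ => t * a - w * Λ t) (nhds 0) (nhds (t * a - 0 * Λ t)) := by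
            exact (tendsto_const_nhds.sub ((continuous_id.mul continuous_const).tendsto 0))
          simpa using this.mono_left nhdsWithin_le_nhds
        exact (ENNReal.continuous_ofReal.tendsto _).comp hc
      have hev : (fun w : ℝ => ENNReal.ofReal (t * a - w * Λ t))
          ≤ᶠ[nhdsWithin 0 (Set.Ioi 0)] (fun w : ℝ => ENNReal.ofReal w * I (a / w)) := by
        filter_upwards [self_mem_nhdsWithin] with w hw
        rw [ofwI w hw]
        exact le_iSup₂ (f := fun t _ => ENNReal.ofReal (t * a - w * Λ t)) t htD
      have := le_of_tendsto_of_tendsto h1 hg0 hev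
      calc ENNReal.ofReal a * ENNReal.ofReal t
          = ENNReal.ofReal (t * a) := by
            rw [← ENNReal.ofReal_mul ha.le, mul_comm]
        _ ≤ g0 := this
    · refine iSup₂_le ?_
      rintro s ⟨t, htD, rfl, htF⟩
      refine le_iInf fun w => le_iInf fun hw => ?_
      calc ENNReal.ofReal a * ENNReal.ofReal t
          = ENNReal.ofReal (t * a) := by
            rw [← ENNReal.ofReal_mul ha.le, mul_comm]
        _ ≤ ENNReal.ofReal (w * F + (t * a - w * Λ t)) := by
            refine ENNReal.ofReal_le_ofReal ?_
            nlinarith [mul_le_mul_of_nonneg_left htF hw.le]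
        _ ≤ ENNReal.ofReal (w * F) + ENNReal.ofReal (t * a - w * Λ t) :=
            ENNReal.ofReal_add_le
        _ ≤ ENNReal.ofReal (w * F) + ENNReal.ofReal w * I (a / w) := by
            refine add_le_add_right ?_ _
            rw [ofwI w hw]
            exact le_iSup₂ (f := fun t _ => ENNReal.ofReal (t * a - w * Λ t)) t htD
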